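/- Let $T$ be a first-countable topological space, $\Omega \subset \mathbb{C}$ open, and $h : T \times \Omega \to \mathbb{C}$ continuous with each section $h_t$ holomorphic. Then the function $(t, z) \mapsto h_t'(z)$ is continuous on $T \times \Omega$. -/

import Mathlib

open Topology

/-- If `h : T × Ω → ℂ` is continuous with holomorphic sections, then
`(t, z) ↦ (h t)'(z)` is continuous on `T × Ω`. -/
theorem deriv_jointly_continuous
    {T : Type*} [TopologicalSpace T] [FirstCountableTopology T]
    (Ω : Set ℂ) (hΩ : IsOpen Ω)
    (h : T → ℂ → ℂ)
    (hcont : ContinuousOn (fun p : T × ℂ => h p.1 p.2) (Set.univ ×ˢ Ω))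
    (hhol : ∀ t : T, DifferentiableOn ℂ (h t) Ω) :
    ContinuousOn (fun p : T × ℂ => deriv (h p.1) p.2) (Set.univ ×ˢ Ω) := by
  rintro ⟨t₀, z₀⟩ ⟨-, hz₀⟩
  obtain ⟨r, hr, hball⟩ := Metric.nhds_basis_closedBall.mem_iff.mp (hΩ.mem_nhds hz₀)
  have hbΩ : Metric.ball z₀ r ⊆ Ω := Metric.ball_subset_closedBall.trans hball
  -- uniform convergence of h t to h t₀ on the closed ball, as t → t₀
  have Hunif : TendstoUniformlyOn h (h t₀) (𝓝 t₀) (Metric.closedBall z₀ r) := by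
    intro u hu
    obtain ⟨v, hv, hvu⟩ := (isCompact_closedBall z₀ r).mem_uniformity_of_prod
      (f := h) (s := Set.univ) (hcont.mono (Set.prod_mono le_rfl hball))
      (Set.mem_univ t₀) (symmetrize_mem_uniformity hu)
    rw [nhdsWithin_univ] at hv
    filter_upwards [hv] with t ht x hx
    exact (hvu t ht x hx).2
  have Hlu : TendstoLocallyUniformlyOn h (h t₀) (𝓝 t₀) (Metric.ball z₀ r) :=
    Hunif.tendstoLocallyUniformlyOn.mono Metric.ball_subset_closedBall
  have Hd : TendstoLocallyUniformlyOn (deriv ∘ h) (deriv (h t₀)) (𝓝 t₀) (Metric.ball z₀ r) :=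
    Hlu.deriv (Filter.Eventually.of_forall fun t => (hhol t).mono hbΩ) Metric.isOpen_ball
  -- transfer the index filter from 𝓝 t₀ to 𝓝[univ ×ˢ Ω] (t₀, z₀) via the first projection
  have Hd' : TendstoLocallyUniformlyOn (fun p : T × ℂ => deriv (h p.1)) (deriv (h t₀))
      (𝓝[Set.univ ×ˢ Ω] (t₀, z₀)) (Metric.ball z₀ r) := by
    intro u hu x hx
    obtain ⟨s, hs, hev⟩ := Hd u hu x hx
    exact ⟨s, hs, (continuousAt_fst.mono_left nhdsWithin_le_nhds).eventually
      (p := fun t => ∀ y ∈ s, (deriv (h t₀) y, (deriv ∘ h) t y) ∈ u) hev⟩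
  -- continuity of deriv (h t₀) at z₀
  have hc : ContinuousWithinAt (deriv (h t₀)) (Metric.ball z₀ r) z₀ :=
    ((((hhol t₀).analyticOnNhd hΩ).deriv.differentiableOn).continuousOn.mono hbΩ)
      z₀ (Metric.mem_ball_self hr)
  have hg : Filter.Tendsto (fun p : T × ℂ => p.2) (𝓝[Set.univ ×ˢ Ω] (t₀, z₀))
      (𝓝[Metric.ball z₀ r] z₀) := by
    rw [nhdsWithin_eq_nhds.2 (Metric.ball_mem_nhds z₀ hr)]
    exact continuousAt_snd.mono_left nhdsWithin_le_nhds
  exact Hd'.tendsto_comp hc (Metric.mem_ball_self hr) hg
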